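/- Suppose m < q < n and γ < 0, and set η = (q−m)/(q(s−1)). Then the zero solution is polynomially stable: there exist δ > 0, t1 ≥ t0 and K > 0 such that every admissible solution with v(t1) ≤ δ satisfies v(t) ≤ K·t^{−η} for all t ≥ t1. -/
import Mathlib


/-- An admissible solution of the reduced equation
`v'(t) = γ·t^{−m/q}·v(t)^s + λ·t^{−n/q}·v(t) + ρ(t)` on `[t0,∞)` with values in
`[0,d0]`, where `|ρ(t)| ≤ M·(t^{−m/q}·v(t)^s + t^{−n/q}·v(t))·(v(t) + t^{−1/q})`. -/
def IsAdmissible (q m n s : ℕ) (γ lam d0 t0 M : ℝ) (v : ℝ → ℝ) : Prop :=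
  (∀ t ≥ t0, v t ∈ Set.Icc (0:ℝ) d0) ∧
  ∃ ρ : ℝ → ℝ,
    (∀ t ≥ t0, |ρ t| ≤
      M * (t ^ (-(m:ℝ)/(q:ℝ)) * v t ^ s + t ^ (-(n:ℝ)/(q:ℝ)) * v t)
        * (v t + t ^ (-(1:ℝ)/(q:ℝ)))) ∧
    (∀ t ≥ t0, HasDerivAt v
      (γ * t ^ (-(m:ℝ)/(q:ℝ)) * v t ^ s + lam * t ^ (-(n:ℝ)/(q:ℝ)) * v t + ρ t) t)

set_option maxHeartbeats 1000000 in
/-- if `m < q < n` and `γ < 0`, then with `η = (q−m)/(q(s−1))`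
the zero solution is polynomially stable: `v(t) ≤ K·t^{−η}`. -/
theorem polynomial_stability_m_lt_q_lt_n
    (q m n s : ℕ) (hq : 0 < q) (hm : 0 < m) (hmn : m < n) (hmq : m < q) (hqn : q < n)
    (hs : 2 ≤ s)
    (γ lam d0 t0 M : ℝ) (hγ : γ < 0) (hlam : lam ≠ 0)
    (hd0 : 0 < d0) (ht0 : 0 < t0) (hM : 0 < M) :
    ∀ η : ℝ, η = ((q:ℝ) - (m:ℝ)) / ((q:ℝ) * ((s:ℝ) - 1)) →
    ∃ δ > 0, ∃ t1 ≥ t0, ∃ K > 0,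
      ∀ v : ℝ → ℝ, IsAdmissible q m n s γ lam d0 t0 M v → v t1 ≤ δ →
        ∀ t ≥ t1, v t ≤ K * t ^ (-η) := by
  intro η hη
  have hq0 : (0:ℝ) < (q:ℝ) := by exact_mod_cast hq
  have hs2 : (2:ℝ) ≤ (s:ℝ) := by exact_mod_cast hs
  have hmq' : (m:ℝ) < (q:ℝ) := by exact_mod_cast hmq
  have hqn' : (q:ℝ) < (n:ℝ) := by exact_mod_cast hqn
  have hη0 : 0 < η := by
    rw [hη]; apply div_pos (by linarith) (by nlinarith)
  have hηq : η * ((q:ℝ) * ((s:ℝ) - 1)) = (q:ℝ) - (m:ℝ) := by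
    rw [hη]; exact div_mul_cancel₀ _ (ne_of_gt (by nlinarith))
  have hγ' : 0 < -γ := by linarith
  set b : ℝ := (n:ℝ)/(q:ℝ) with hb_def
  have hb1 : 1 < b := (one_lt_div hq0).mpr hqn'
  set c : ℝ := 1/(q:ℝ) with hc_def
  have hc0 : 0 < c := by positivity
  set b1 : ℝ := b - 1 with hb1_def
  have hb10 : 0 < b1 := by simp only [hb1_def]; linarith
  set μ : ℝ := min η c with hμ_def
  have hμ0 : 0 < μ := lt_min hη0 hc0
  have hμη : μ ≤ η := min_le_left _ _
  have hμc : μ ≤ c := min_le_right _ _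
  -- choose K
  set K : ℝ := max 1 ((2*η+2)/(-γ)) with hK_def
  have hK1 : (1:ℝ) ≤ K := le_max_left _ _
  have hK0 : (0:ℝ) < K := lt_of_lt_of_le one_pos hK1
  have hKpow : (2*η+2) * K ≤ (-γ) * K^s := by
    have h1 : (2*η+2)/(-γ) ≤ K := le_max_right _ _
    have h2 : K ≤ K^(s-1) := by
      calc K = K^1 := (pow_one K).symm
      _ ≤ K^(s-1) := pow_le_pow_right₀ hK1 (by omega)
    have h3 : (2*η+2) ≤ (-γ) * K^(s-1) := by
      rw [div_le_iff₀ hγ'] at h1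
      calc (2*η+2) ≤ K * (-γ) := h1
      _ ≤ K^(s-1) * (-γ) := mul_le_mul_of_nonneg_right h2 hγ'.le
      _ = (-γ) * K^(s-1) := by ring
    have h4 : K^(s-1) * K = K^s := by
      rw [← pow_succ]; congr 1; omega
    calc (2*η+2) * K ≤ ((-γ) * K^(s-1)) * K := mul_le_mul_of_nonneg_right h3 hK0.le
      _ = (-γ) * K^s := by rw [mul_assoc, h4]
  -- choose t1
  set F : ℝ → ℝ := fun T => |lam| * T^(-b1) + 2*M*K^s * T^(-μ)
      + 2*M*K * (T^(-b1) * T^(-μ)) with hF_def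
  have hFtend : Filter.Tendsto F Filter.atTop (nhds 0) := by
    have e1 := (tendsto_rpow_neg_atTop hb10).const_mul |lam|
    have e2 := (tendsto_rpow_neg_atTop hμ0).const_mul (2*M*K^s)
    have e3 := ((tendsto_rpow_neg_atTop hb10).mul
      (tendsto_rpow_neg_atTop hμ0)).const_mul (2*M*K)
    have := (e1.add e2).add e3
    simpa using this
  have hev : ∀ᶠ T in Filter.atTop, F T < 1/2 ∧ max t0 1 ≤ T := by
    filter_upwards [hFtend.eventually_lt_const (by norm_num : (0:ℝ) < 1/2),
      Filter.eventually_ge_atTop (max t0 1)] with T h1 h2 using ⟨h1, h2⟩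
  obtain ⟨t1, hFt1, ht1m⟩ := hev.exists
  have ht1t0 : t0 ≤ t1 := le_trans (le_max_left _ _) ht1m
  have ht11 : (1:ℝ) ≤ t1 := le_trans (le_max_right _ _) ht1m
  have ht1pos : (0:ℝ) < t1 := lt_of_lt_of_le one_pos ht11
  refine ⟨K * t1 ^ (-η), by positivity, t1, ht1t0, K, hK0, ?_⟩
  rintro v ⟨hrange, ρ, hρ, hderiv⟩ hv1 t ht
  -- apply the fencing theorem on [t1, t]
  have key : ∀ ⦃x⦄, x ∈ Set.Icc t1 t → v x ≤ K * x ^ (-η) := by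
    refine image_le_of_deriv_right_lt_deriv_boundary'
      (f := v)
      (f' := fun x => γ * x ^ (-(m:ℝ)/(q:ℝ)) * v x ^ s + lam * x ^ (-(n:ℝ)/(q:ℝ)) * v x + ρ x)
      (B := fun x => K * x ^ (-η)) (B' := fun x => K * (-η * x ^ (-η - 1)))
      ?_ ?_ hv1 ?_ ?_ ?_
    · intro x hx
      exact (hderiv x (le_trans ht1t0 hx.1)).continuousAt.continuousWithinAt
    · intro x hx
      exact (hderiv x (le_trans ht1t0 hx.1)).hasDerivWithinAt
    · intro x hx
      have hx0 : (0:ℝ) < x := lt_of_lt_of_le ht1pos hx.1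
      exact (continuousAt_const.mul
        (Real.continuousAt_rpow_const _ _ (Or.inl hx0.ne'))).continuousWithinAt
    · intro x hx
      have hx0 : (0:ℝ) < x := lt_of_lt_of_le ht1pos hx.1
      exact ((Real.hasDerivAt_rpow_const (p := -η) (Or.inl hx0.ne')).const_mul
        K).hasDerivWithinAt
    · -- the key estimate at a touching point
      intro x hx hvx
      have hvx' : v x = K * x ^ (-η) := hvx
      have hx1 : t1 ≤ x := hx.1
      have hx0 : (0:ℝ) < x := lt_of_lt_of_le ht1pos hx1
      have hx1' : (1:ℝ) ≤ x := le_trans ht11 hx1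
      have hxt0 : t0 ≤ x := le_trans ht1t0 hx1
      have hv0 : 0 ≤ v x := (hrange x hxt0).1
      set X : ℝ := x ^ (-η - 1) with hX_def
      have hX0 : 0 < X := Real.rpow_pos_of_pos hx0 _
      set T1b : ℝ := t1 ^ (-b1) with hT1b_def
      set Tμ : ℝ := t1 ^ (-μ) with hTμ_def
      have hT1b0 : 0 ≤ T1b := (Real.rpow_pos_of_pos ht1pos _).le
      have hTμ0 : 0 ≤ Tμ := (Real.rpow_pos_of_pos ht1pos _).le
      -- the leading term
      have hexp : -(m:ℝ)/(q:ℝ) + -η * (s:ℝ) = -η - 1 := by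
        have h := hηq
        field_simp
        linarith
      have hA : x ^ (-(m:ℝ)/(q:ℝ)) * v x ^ s = K ^ s * X := by
        calc x ^ (-(m:ℝ)/(q:ℝ)) * v x ^ s
            = K ^ s * (x ^ (-(m:ℝ)/(q:ℝ)) * x ^ (-η * (s:ℝ))) := by
              rw [hvx', mul_pow, ← Real.rpow_natCast (x ^ (-η)) s,
                ← Real.rpow_mul hx0.le]; ring
          _ = K ^ s * X := by
              rw [← Real.rpow_add hx0, hexp, hX_def]
      -- the linear term
      have hB2 : x ^ (-(n:ℝ)/(q:ℝ)) * v x ≤ K * (X * T1b) := by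
        have e1 : x ^ (-(n:ℝ)/(q:ℝ)) * v x = K * (X * x ^ (-b1)) := by
          have h1 : x ^ (-(n:ℝ)/(q:ℝ)) * x ^ (-η) = x ^ (-η - 1) * x ^ (-b1) := by
            rw [← Real.rpow_add hx0, ← Real.rpow_add hx0]
            congr 1
            rw [hb1_def, hb_def]
            ring
          calc x ^ (-(n:ℝ)/(q:ℝ)) * v x = K * (x ^ (-(n:ℝ)/(q:ℝ)) * x ^ (-η)) := by
                rw [hvx']; ring
            _ = K * (X * x ^ (-b1)) := by rw [h1, hX_def]
        have e2 : x ^ (-b1) ≤ T1b :=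
          Real.rpow_le_rpow_of_nonpos ht1pos hx1 (by linarith)
        rw [e1]
        exact mul_le_mul_of_nonneg_left (mul_le_mul_of_nonneg_left e2 hX0.le) hK0.le
      -- the small factor
      have hB3 : v x + x ^ (-(1:ℝ)/(q:ℝ)) ≤ 2*K*Tμ := by
        have e0 : x ^ (-μ) ≤ Tμ := Real.rpow_le_rpow_of_nonpos ht1pos hx1 (by linarith)
        have e1 : x ^ (-η) ≤ x ^ (-μ) :=
          Real.rpow_le_rpow_of_exponent_le hx1' (by linarith)
        have e2 : x ^ (-(1:ℝ)/(q:ℝ)) ≤ x ^ (-μ) := by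
          have : -(1:ℝ)/(q:ℝ) = -c := by rw [hc_def]; ring
          rw [this]
          exact Real.rpow_le_rpow_of_exponent_le hx1' (by linarith)
        have e3 : v x ≤ K * Tμ := by
          rw [hvx']
          calc K * x ^ (-η) ≤ K * x ^ (-μ) := mul_le_mul_of_nonneg_left e1 hK0.le
            _ ≤ K * Tμ := mul_le_mul_of_nonneg_left e0 hK0.le
        have e4 : x ^ (-(1:ℝ)/(q:ℝ)) ≤ Tμ := le_trans e2 e0
        have e5 : Tμ ≤ K * Tμ := le_mul_of_one_le_left hTμ0 hK1
        linarith
      -- the remainder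
      have hRem : ρ x ≤ X * K * (2*M*K^s * Tμ + 2*M*K * (T1b * Tμ)) := by
        have h1 := le_trans (le_abs_self _) (hρ x hxt0)
        have hfac1 : x ^ (-(m:ℝ)/(q:ℝ)) * v x ^ s + x ^ (-(n:ℝ)/(q:ℝ)) * v x
            ≤ K^s * X + K * (X * T1b) := by rw [hA]; linarith only [hB2]
        have hnn1 : 0 ≤ x ^ (-(m:ℝ)/(q:ℝ)) * v x ^ s + x ^ (-(n:ℝ)/(q:ℝ)) * v x := by
          have := Real.rpow_pos_of_pos hx0 (-(m:ℝ)/(q:ℝ))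
          have := Real.rpow_pos_of_pos hx0 (-(n:ℝ)/(q:ℝ))
          positivity
        have hnn2 : 0 ≤ v x + x ^ (-(1:ℝ)/(q:ℝ)) := by
          have := Real.rpow_pos_of_pos hx0 (-(1:ℝ)/(q:ℝ))
          positivity
        have hKs0 : (0:ℝ) < K^s := pow_pos hK0 s
        calc ρ x ≤ M * (x ^ (-(m:ℝ)/(q:ℝ)) * v x ^ s + x ^ (-(n:ℝ)/(q:ℝ)) * v x)
              * (v x + x ^ (-(1:ℝ)/(q:ℝ))) := h1
          _ ≤ M * (K^s * X + K * (X * T1b)) * (2*K*Tμ) := by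
              apply mul_le_mul
              · exact mul_le_mul_of_nonneg_left hfac1 hM.le
              · exact hB3
              · exact hnn2
              · positivity
          _ = X * K * (2*M*K^s * Tμ + 2*M*K * (T1b * Tμ)) := by ring
      -- the lam term
      have hLam : lam * x ^ (-(n:ℝ)/(q:ℝ)) * v x ≤ X * K * (|lam| * T1b) := by
        have hnn : 0 ≤ x ^ (-(n:ℝ)/(q:ℝ)) * v x := by
          have := Real.rpow_pos_of_pos hx0 (-(n:ℝ)/(q:ℝ))
          positivity
        calc lam * x ^ (-(n:ℝ)/(q:ℝ)) * v x = lam * (x ^ (-(n:ℝ)/(q:ℝ)) * v x) := by ring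
          _ ≤ |lam| * (x ^ (-(n:ℝ)/(q:ℝ)) * v x) :=
              mul_le_mul_of_nonneg_right (le_abs_self lam) hnn
          _ ≤ |lam| * (K * (X * T1b)) := mul_le_mul_of_nonneg_left hB2 (abs_nonneg lam)
          _ = X * K * (|lam| * T1b) := by ring
      -- combine everything
      have hFx : |lam| * T1b + 2*M*K^s * Tμ + 2*M*K * (T1b * Tμ) < 1/2 := hFt1
      have hxexp : x ^ (-η - 1) = X := rfl
      show γ * x ^ (-(m:ℝ)/(q:ℝ)) * v x ^ s + lam * x ^ (-(n:ℝ)/(q:ℝ)) * v x + ρ x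
          < K * (-η * x ^ (-η - 1))
      have hA' : γ * x ^ (-(m:ℝ)/(q:ℝ)) * v x ^ s = γ * K^s * X := by
        rw [mul_assoc, hA]; ring
      rw [hxexp, hA']
      have hγKs : γ * K^s * X ≤ -(2*η+2) * K * X := by
        have h := mul_le_mul_of_nonneg_right hKpow hX0.le
        linarith only [h]
      have hsum : lam * x ^ (-(n:ℝ)/(q:ℝ)) * v x + ρ x
          ≤ (X * K) * (|lam| * T1b + 2*M*K^s * Tμ + 2*M*K * (T1b * Tμ)) := by
        have h := add_le_add hLam hRem
        linarith only [h]
      have hhalf : (X * K) * (|lam| * T1b + 2*M*K^s * Tμ + 2*M*K * (T1b * Tμ))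
          < (X * K) * (1/2) := mul_lt_mul_of_pos_left hFx (mul_pos hX0 hK0)
      have hpos : 0 < (X * K) * (η + 3/2) :=
        mul_pos (mul_pos hX0 hK0) (by linarith only [hη0])
      have hgoal : γ * K^s * X + (lam * x ^ (-(n:ℝ)/(q:ℝ)) * v x + ρ x)
          < K * (-η * X) := by
        linarith only [hγKs, hsum, hhalf, hpos]
      linarith only [hgoal]
  exact key (Set.mem_Icc.mpr ⟨ht, le_rfl⟩)
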